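/- If unif(N) = 𝔟 then unif(E) = min{unif(M), unif(N)}. -/

import Mathlib

open MeasureTheory Set Filter Cardinal

/-- `μ` is the uniform product ("fair coin") probability measure on Cantor space `2^ω`,
characterized by its values on cylinders. -/
def IsFairCoin (μ : Measure (ℕ → Bool)) : Prop :=
  ∀ (s : Finset ℕ) (σ : ℕ → Bool),
    μ {x : ℕ → Bool | ∀ i ∈ s, x i = σ i} = (1 / 2 : ENNReal) ^ s.card

/-- The σ-ideal of μ-null sets. -/
def nullIdeal (μ : Measure (ℕ → Bool)) : Set (Set (ℕ → Bool)) := {A | μ A = 0}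

/-- The σ-ideal of meager subsets of Cantor space. -/
def meagerIdeal : Set (Set (ℕ → Bool)) := {A | IsMeagre A}

/-- The σ-ideal generated by closed measure zero sets. -/
def closedNullIdeal (μ : Measure (ℕ → Bool)) : Set (Set (ℕ → Bool)) :=
  {A | ∃ F : ℕ → Set (ℕ → Bool), (∀ n, IsClosed (F n) ∧ μ (F n) = 0) ∧ A ⊆ ⋃ n, F n}

/-- `add(I, J)`: the least cardinality of a subfamily of `I` whose union is not in `J`. -/
noncomputable def addIJ (I J : Set (Set (ℕ → Bool))) : Cardinal :=
  sInf {c : Cardinal | ∃ A : Set (Set (ℕ → Bool)), A ⊆ I ∧ ⋃₀ A ∉ J ∧ c = #A}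

/-- `cov(J)`: the least cardinality of a subfamily of `J` covering the whole space. -/
noncomputable def covI (J : Set (Set (ℕ → Bool))) : Cardinal :=
  sInf {c : Cardinal | ∃ A : Set (Set (ℕ → Bool)), A ⊆ J ∧ ⋃₀ A = Set.univ ∧ c = #A}

/-- `unif(J)`: the least cardinality of a set of reals not in `J`. -/
noncomputable def unifI (J : Set (Set (ℕ → Bool))) : Cardinal :=
  sInf {c : Cardinal | ∃ X : Set (ℕ → Bool), X ∉ J ∧ c = #X}

/-- `cof(I, J)`: the least cardinality of a subfamily of `J` cofinal over `I`. -/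
noncomputable def cofIJ (I J : Set (Set (ℕ → Bool))) : Cardinal :=
  sInf {c : Cardinal | ∃ A : Set (Set (ℕ → Bool)), A ⊆ J ∧
    (∀ B ∈ I, ∃ C ∈ A, B ⊆ C) ∧ c = #A}

/-- The dominating number 𝔡. -/
noncomputable def frakD : Cardinal :=
  sInf {c : Cardinal | ∃ F : Set (ℕ → ℕ),
    (∀ g : ℕ → ℕ, ∃ f ∈ F, ∀ᶠ n in atTop, g n ≤ f n) ∧ c = #F}

/-- The unbounding number 𝔟. -/
noncomputable def frakB : Cardinal :=
  sInf {c : Cardinal | ∃ F : Set (ℕ → ℕ),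
    (∀ g : ℕ → ℕ, ∃ f ∈ F, ¬ ∀ᶠ n in atTop, f n ≤ g n) ∧ c = #F}

/-! ### Auxiliary material -/

/-- Basic clopen cylinder determined by a finite binary string. -/
def cylSet (l : List Bool) : Set (ℕ → Bool) :=
  {x | ∀ i < l.length, x i = l.getD i false}

lemma isClosed_cylSet (l : List Bool) : IsClosed (cylSet l) := by
  have : cylSet l = ⋂ i ∈ Finset.range l.length,
      (fun x : ℕ → Bool => x i) ⁻¹' {l.getD i false} := by
    ext x; simp [cylSet]
  rw [this]
  exact isClosed_biInter fun i _ => (isClosed_singleton).preimage (continuous_apply i)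

lemma isOpen_cylSet (l : List Bool) : IsOpen (cylSet l) := by
  have : cylSet l = ⋂ i ∈ Finset.range l.length,
      (fun x : ℕ → Bool => x i) ⁻¹' {l.getD i false} := by
    ext x; simp [cylSet]
  rw [this]
  exact isOpen_biInter_finset fun i _ =>
    (isOpen_discrete _).preimage (continuous_apply i)

lemma measure_cylSet {μ : Measure (ℕ → Bool)} (hμ : IsFairCoin μ) (l : List Bool) :
    μ (cylSet l) = (1 / 2 : ENNReal) ^ l.length := by
  have h := hμ (Finset.range l.length) (fun i => l.getD i false)
  have he : {x : ℕ → Bool | ∀ i ∈ Finset.range l.length, x i = l.getD i false} = cylSet l := by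
    ext x; simp [cylSet]
  rw [he, Finset.card_range] at h
  exact h

lemma measure_cylSet_pos {μ : Measure (ℕ → Bool)} (hμ : IsFairCoin μ) (l : List Bool) :
    0 < μ (cylSet l) := by
  rw [measure_cylSet hμ l]
  exact (pow_ne_zero _ (by norm_num)).bot_lt

lemma getD_ofFn {n : ℕ} (f : Fin n → Bool) (i : ℕ) (h : i < n) :
    (List.ofFn f).getD i false = f ⟨i, h⟩ := by
  simp [List.getD, List.getElem?_ofFn, h]

/-- Cylinders form a basis: any point of an open set lies in a cylinder inside it. -/
lemma exists_cylSet_subset {U : Set (ℕ → Bool)} (hU : IsOpen U) {x : ℕ → Bool} (hx : x ∈ U) :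
    ∃ l : List Bool, x ∈ cylSet l ∧ cylSet l ⊆ U := by
  obtain ⟨I, u, h1, h2⟩ := isOpen_pi_iff.mp hU x hx
  set n : ℕ := I.sup id + 1 with hn
  refine ⟨List.ofFn (fun i : Fin n => x i), ?_, ?_⟩
  · intro i hi
    rw [List.length_ofFn] at hi
    rw [getD_ofFn _ i hi]
  · intro y hy
    refine h2 ?_
    rw [Set.mem_pi]
    intro i hiI
    have hilt : i < n := Nat.lt_succ_of_le (Finset.le_sup (f := id) hiI)
    have hyi : y i = x i := by
      have := hy i (by rw [List.length_ofFn]; exact hilt)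
      rw [this, getD_ofFn _ i hilt]
    exact hyi ▸ (h1 i hiI).2

lemma measure_univ_fairCoin {μ : Measure (ℕ → Bool)} (hμ : IsFairCoin μ) :
    μ Set.univ = 1 := by
  have h := hμ ∅ (fun _ => false)
  simpa using h

/-- `E ⊆ N`. -/
lemma closedNull_subset_null {μ : Measure (ℕ → Bool)} :
    closedNullIdeal μ ⊆ nullIdeal μ := by
  rintro A ⟨F, hF, hsub⟩
  have : μ (⋃ n, F n) = 0 := measure_iUnion_null fun n => (hF n).2
  exact le_antisymm (le_trans (measure_mono hsub) this.le) (zero_le)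

/-- `E ⊆ M`. -/
lemma closedNull_subset_meager {μ : Measure (ℕ → Bool)} (hμ : IsFairCoin μ) :
    closedNullIdeal μ ⊆ meagerIdeal := by
  rintro A ⟨F, hF, hsub⟩
  have hnd : ∀ n, IsNowhereDense (F n) := by
    intro n
    rw [(hF n).1.isNowhereDense_iff]
    by_contra hne
    obtain ⟨x, hx⟩ := Set.nonempty_iff_ne_empty.mpr hne
    obtain ⟨l, hxl, hlsub⟩ := exists_cylSet_subset isOpen_interior hx
    have : μ (cylSet l) ≤ μ (F n) :=
      measure_mono (hlsub.trans interior_subset)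
    rw [(hF n).2] at this
    exact absurd (le_antisymm this (zero_le)) (measure_cylSet_pos hμ l).ne'
  have hFm : ∀ n, IsMeagre (F n) := by
    intro n
    rw [isMeagre_iff_countable_union_isNowhereDense]
    exact ⟨{F n}, by simpa using hnd n, countable_singleton _, by simp⟩
  exact IsMeagre.mono hsub (isMeagre_iUnion hFm)

/-- A family of functions of cardinality below `frakB` is eventually dominated. -/
lemma bounded_of_lt_frakB {G : Set (ℕ → ℕ)} (hG : #G < frakB) :
    ∃ g : ℕ → ℕ, ∀ f ∈ G, ∀ᶠ n in atTop, f n ≤ g n := by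
  by_contra hcon
  push_neg at hcon
  have : frakB ≤ #G := csInf_le' ⟨G, fun g => by
    obtain ⟨f, hf, h'⟩ := hcon g
    exact ⟨f, hf, by simp only [Filter.not_eventually, not_le]; exact h'⟩, rfl⟩
  exact absurd hG (not_lt.mpr this)

/-- The key combinatorial lemma: a null set `X` such that all associated index
functions are dominated (in particular any null set of size `< 𝔟`) belongs to `E`. -/
lemma mem_closedNullIdeal_of_small {μ : Measure (ℕ → Bool)} (hμ : IsFairCoin μ)
    [μ.OuterRegular] {X : Set (ℕ → Bool)} (hXnull : μ X = 0) (hXb : #X < frakB) :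
    X ∈ closedNullIdeal μ := by
  classical
  -- choose open sets of small measure containing X
  have hU : ∀ n : ℕ, ∃ U : Set (ℕ → Bool), X ⊆ U ∧ IsOpen U ∧ μ U < (1 / 2 : ENNReal) ^ n := by
    intro n
    have : μ X < (1 / 2 : ENNReal) ^ n := by
      rw [hXnull]; exact (pow_ne_zero _ (by norm_num)).bot_lt
    obtain ⟨U, hXU, hUopen, hUlt⟩ := Set.exists_isOpen_lt_of_lt X _ this
    exact ⟨U, hXU, hUopen, hUlt⟩
  choose U hXU hUopen hUsmall using hU
  -- enumerate all finite binary strings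
  obtain ⟨e, he⟩ : ∃ e : ℕ → List Bool, Function.Surjective e :=
    ⟨fun n => (Encodable.decode n).getD [], fun l => ⟨Encodable.encode l, by simp⟩⟩
  -- the pieces: cylinders inside `U n`
  set D : ℕ → ℕ → Set (ℕ → Bool) := fun n k =>
    if cylSet (e k) ⊆ U n then cylSet (e k) else ∅ with hD
  have hDclosed : ∀ n k, IsClosed (D n k) := by
    intro n k; rw [hD]; dsimp only
    split
    · exact isClosed_cylSet _
    · exact isClosed_empty
  have hDsub : ∀ n k, D n k ⊆ U n := by
    intro n k; rw [hD]; dsimp only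
    split
    · assumption
    · exact empty_subset _
  -- for each x ∈ X and n there is k with x ∈ D n k
  have hex : ∀ x : X, ∀ n : ℕ, ∃ k : ℕ, (x : ℕ → Bool) ∈ D n k := by
    intro x n
    obtain ⟨l, hxl, hlsub⟩ := exists_cylSet_subset (hUopen n) (hXU n x.2)
    obtain ⟨k, hk⟩ := he l
    exact ⟨k, by rw [hD]; dsimp only; rw [hk, if_pos hlsub]; exact hxl⟩
  choose gx hgx using hex
  -- dominate the family {gx x : x ∈ X}
  have hcard : #(Set.range gx) < frakB := lt_of_le_of_lt Cardinal.mk_range_le hXb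
  obtain ⟨g, hg⟩ := bounded_of_lt_frakB hcard
  -- the closed null sets
  set F : ℕ → Set (ℕ → Bool) := fun m =>
    ⋂ n, ⋂ (_ : m ≤ n), ⋃ k ∈ Finset.range (g n + 1), D n k with hF
  refine ⟨F, ?_, ?_⟩
  · intro m
    constructor
    · exact isClosed_iInter fun n => isClosed_iInter fun _ =>
        (Finset.range (g n + 1)).finite_toSet.isClosed_biUnion fun k _ => hDclosed n k
    · -- F m is contained in U n for every n ≥ m
      have hsub : ∀ n, m ≤ n → F m ⊆ U n := by
        intro n hmn
        intro z hz
        have hz' : z ∈ ⋃ k ∈ Finset.range (g n + 1), D n k :=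
          Set.mem_iInter.mp (Set.mem_iInter.mp hz n) hmn
        obtain ⟨k, _, hk⟩ := Set.mem_iUnion₂.mp hz'
        exact hDsub n k hk
      have hle : ∀ n : ℕ, μ (F m) ≤ (1 / 2 : ENNReal) ^ (n + m) :=
        fun n => le_of_lt (lt_of_le_of_lt (measure_mono (hsub (n + m) (Nat.le_add_left m n)))
          (hUsmall (n + m)))
      have htend : Tendsto (fun n : ℕ => (1 / 2 : ENNReal) ^ (n + m)) atTop (nhds 0) := by
        have h1 : Tendsto (fun n : ℕ => (1 / 2 : ENNReal) ^ n) atTop (nhds 0) :=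
          ENNReal.tendsto_pow_atTop_nhds_zero_of_lt_one (by norm_num)
        exact h1.comp (tendsto_add_atTop_nat m)
      have : μ (F m) ≤ 0 := ge_of_tendsto' htend fun n => hle n
      exact le_antisymm this (zero_le)
  · -- X is covered by the F m
    intro x hx
    have hmem : gx ⟨x, hx⟩ ∈ Set.range gx := Set.mem_range_self _
    obtain ⟨m, hm⟩ := (eventually_atTop).mp (hg _ hmem)
    refine Set.mem_iUnion.mpr ⟨m, ?_⟩
    rw [hF]
    refine Set.mem_iInter.mpr fun n => Set.mem_iInter.mpr fun hmn => ?_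
    refine Set.mem_biUnion ?_ (hgx ⟨x, hx⟩ n)
    exact Finset.mem_range.mpr (Nat.lt_succ_of_le (hm n hmn))

theorem unif_E_eq_min (μ : Measure (ℕ → Bool)) (hμ : IsFairCoin μ)
    (h : unifI (nullIdeal μ) = frakB) :
    unifI (closedNullIdeal μ) = min (unifI meagerIdeal) (unifI (nullIdeal μ)) := by
  haveI : IsFiniteMeasure μ :=
    ⟨by rw [measure_univ_fairCoin hμ]; exact ENNReal.one_lt_top⟩
  have hNuniv : (Set.univ : Set (ℕ → Bool)) ∉ nullIdeal μ := by
    simp only [nullIdeal, Set.mem_setOf_eq, measure_univ_fairCoin hμ]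
    exact one_ne_zero
  have hEuniv : (Set.univ : Set (ℕ → Bool)) ∉ closedNullIdeal μ :=
    fun hmem => hNuniv (closedNull_subset_null hmem)
  have hMuniv : (Set.univ : Set (ℕ → Bool)) ∉ meagerIdeal := by
    intro hmem
    have : Dense (Set.univ : Set (ℕ → Bool))ᶜ := dense_of_mem_residual hmem
    rw [Set.compl_univ] at this
    exact absurd (this.nonempty) (by simp)
  -- `unif(E) ≤ unif(N)` and `unif(E) ≤ unif(M)`
  have hle : ∀ J : Set (Set (ℕ → Bool)), closedNullIdeal μ ⊆ J →
      ((Set.univ : Set (ℕ → Bool)) ∉ J) → unifI (closedNullIdeal μ) ≤ unifI J := by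
    intro J hJ hJuniv
    apply csInf_le_csInf (OrderBot.bddBelow _)
    · exact ⟨#(Set.univ : Set (ℕ → Bool)), Set.univ, hJuniv, rfl⟩
    · rintro c ⟨Y, hY, rfl⟩
      exact ⟨Y, fun hmem => hY (hJ hmem), rfl⟩
  have h1 : unifI (closedNullIdeal μ) ≤ unifI meagerIdeal :=
    hle _ (closedNull_subset_meager hμ) hMuniv
  have h2 : unifI (closedNullIdeal μ) ≤ unifI (nullIdeal μ) :=
    hle _ closedNull_subset_null hNuniv
  -- `𝔟 ≤ unif(E)`
  have h3 : frakB ≤ unifI (closedNullIdeal μ) := by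
    refine le_csInf ⟨#(Set.univ : Set (ℕ → Bool)), ⟨Set.univ, hEuniv, rfl⟩⟩ ?_
    rintro c ⟨Y, hY, rfl⟩
    by_contra hlt
    push_neg at hlt
    have hYnull : μ Y = 0 := by
      by_contra hne
      have : unifI (nullIdeal μ) ≤ #Y := csInf_le' ⟨Y, hne, rfl⟩
      rw [h] at this
      exact absurd hlt (not_lt.mpr this)
    exact hY (mem_closedNullIdeal_of_small hμ hYnull hlt)
  refine le_antisymm (le_min h1 h2) ?_
  calc min (unifI meagerIdeal) (unifI (nullIdeal μ)) ≤ unifI (nullIdeal μ) := min_le_right _ _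
    _ = frakB := h
    _ ≤ unifI (closedNullIdeal μ) := h3
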